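/- arXiv:2004.09254 — 3 statements merged into one kernel-verified Lean document; each statement's English description precedes it below -/
import Mathlib

section
/- Let L : ℝ × ℝ × ℝ → ℝ be a smooth Lagrangian L(t, q, v), let q : ℝ → ℝ be a smooth Euler–Lagrange solution, i.e. d/dt[∂₃L(t, q(t), q′(t))] = ∂₂L(t, q(t), q′(t)) for all t, and let ξ : ℝ → ℝ and φ : ℝ × ℝ → ℝ be smooth (the infinitesimal time transformation Δt = ξ(t) and space transformation Δq = φ(t, q)). Assume the infinitesimal invariance identity along q: for all t, with all partials of L evaluated at (t, q(t), q′(t)), ∂₁L·ξ(t) + ∂₂L·φ(t, q(t)) + ∂₃L·(d/dt[φ(t, q(t))] − q′(t)·ξ′(t)) + L(t, q(t), q′(t))·ξ′(t) = 0. Then the Noether quantity J(t) = L(t, q(t), q′(t))·ξ(t) + ∂₃L(t, q(t), q′(t))·(φ(t, q(t)) − q′(t)·ξ(t)) is constant on ℝ (Noether's first theorem for a one-parameter group acting on both the independent and dependent variables). -/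
/-- Noether's first theorem for a one-parameter group acting on both the
independent and the dependent variable: if `q` is a smooth Euler–Lagrange
solution of the smooth Lagrangian `L(t, q, v)`, and the infinitesimal
transformation `Δt = ξ(t)`, `Δq = φ(t, q)` satisfies the infinitesimal
invariance identity
`∂₁L·ξ + ∂₂L·φ + ∂₃L·(d/dt[φ(t,q(t))] − q′·ξ′) + L·ξ′ = 0` along `q`,
then the Noether quantity
`J(t) = L·ξ(t) + ∂₃L·(φ(t, q(t)) − q′(t)·ξ(t))` is constant on `ℝ`. -/
theorem noether_first_theorem_time_and_space
    (L : ℝ × ℝ × ℝ → ℝ) (q : ℝ → ℝ) (ξ : ℝ → ℝ) (φ : ℝ × ℝ → ℝ)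
    (hL : ContDiff ℝ (⊤ : ℕ∞) L)
    (hq : ContDiff ℝ (⊤ : ℕ∞) q)
    (hξ : ContDiff ℝ (⊤ : ℕ∞) ξ)
    (hφ : ContDiff ℝ (⊤ : ℕ∞) φ)
    (P1 P2 P3 : ℝ → ℝ)
    (hP1 : ∀ t, P1 t = deriv (fun s => L (s, q t, deriv q t)) t)
    (hP2 : ∀ t, P2 t = deriv (fun s => L (t, s, deriv q t)) (q t))
    (hP3 : ∀ t, P3 t = deriv (fun s => L (t, q t, s)) (deriv q t))
    (hEL : ∀ t, deriv P3 t = P2 t)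
    (hinv : ∀ t : ℝ,
      P1 t * ξ t + P2 t * φ (t, q t)
        + P3 t * (deriv (fun s => φ (s, q s)) t - deriv q t * deriv ξ t)
        + L (t, q t, deriv q t) * deriv ξ t = 0)
    (J : ℝ → ℝ)
    (hJ : ∀ t, J t = L (t, q t, deriv q t) * ξ t
        + P3 t * (φ (t, q t) - deriv q t * ξ t)) :
    ∀ s t : ℝ, J s = J t := by
  have hLd : Differentiable ℝ L := hL.differentiable (by simp)
  have hqd : Differentiable ℝ q := hq.differentiable (by simp)
  have hq' : ContDiff ℝ (⊤ : ℕ∞) (deriv q) := (contDiff_infty_iff_deriv.mp hq).2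
  have hq'd : Differentiable ℝ (deriv q) := hq'.differentiable (by simp)
  have hξd : Differentiable ℝ ξ := hξ.differentiable (by simp)
  set G : ℝ → ℝ × ℝ × ℝ := fun t => (t, q t, deriv q t) with hGdef
  have hGc : ContDiff ℝ (⊤ : ℕ∞) G := contDiff_id.prodMk (hq.prodMk hq')
  have hGd : ∀ t, HasDerivAt G (1, deriv q t, deriv (deriv q) t) t := fun t =>
    (hasDerivAt_id t).prodMk (((hqd t).hasDerivAt).prodMk ((hq'd t).hasDerivAt))
  have hD1 : ∀ t, P1 t = fderiv ℝ L (G t) (1, 0, 0) := by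
    intro t
    rw [hP1]
    have h1 : HasDerivAt (fun s : ℝ => ((s, q t, deriv q t) : ℝ × ℝ × ℝ)) (1, 0, 0) t :=
      (hasDerivAt_id t).prodMk ((hasDerivAt_const _ _).prodMk (hasDerivAt_const _ _))
    exact ((hLd ((t, q t, deriv q t))).hasFDerivAt.comp_hasDerivAt t h1).deriv
  have hD2 : ∀ t, P2 t = fderiv ℝ L (G t) (0, 1, 0) := by
    intro t
    rw [hP2]
    have h1 : HasDerivAt (fun s : ℝ => ((t, s, deriv q t) : ℝ × ℝ × ℝ)) (0, 1, 0) (q t) :=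
      (hasDerivAt_const _ _).prodMk ((hasDerivAt_id _).prodMk (hasDerivAt_const _ _))
    exact ((hLd ((t, q t, deriv q t))).hasFDerivAt.comp_hasDerivAt _ h1).deriv
  have hD3 : ∀ t, P3 t = fderiv ℝ L (G t) (0, 0, 1) := by
    intro t
    rw [hP3]
    have h1 : HasDerivAt (fun s : ℝ => ((t, q t, s) : ℝ × ℝ × ℝ)) (0, 0, 1) (deriv q t) :=
      (hasDerivAt_const _ _).prodMk ((hasDerivAt_const _ _).prodMk (hasDerivAt_id _))
    exact ((hLd ((t, q t, deriv q t))).hasFDerivAt.comp_hasDerivAt _ h1).deriv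
  -- P3 is smooth
  have hP3eq : P3 = fun t => fderiv ℝ L (G t) (0, 0, 1) := funext hD3
  have hP3c : ContDiff ℝ (⊤ : ℕ∞) P3 := by
    rw [hP3eq]
    exact ((hL.fderiv_right (by exact_mod_cast le_top)).comp hGc).clm_apply contDiff_const
  have hP3d : Differentiable ℝ P3 := hP3c.differentiable (by simp)
  -- derivative of L ∘ G
  have hLG : ∀ t, HasDerivAt (fun t => L (G t))
      (P1 t + deriv q t * P2 t + deriv (deriv q) t * P3 t) t := by
    intro t
    have h := (hLd ((t, q t, deriv q t))).hasFDerivAt.comp_hasDerivAt t (hGd t)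
    refine h.congr_deriv (Eq.symm ?_)
    rw [hD1, hD2, hD3]
    have hsplit : ((1 : ℝ), deriv q t, deriv (deriv q) t)
        = ((1 : ℝ), (0 : ℝ), (0 : ℝ)) + deriv q t • ((0 : ℝ), (1 : ℝ), (0 : ℝ))
          + deriv (deriv q) t • ((0 : ℝ), (0 : ℝ), (1 : ℝ)) := by
      simp [Prod.ext_iff]
    rw [hsplit, map_add, map_add, map_smul, map_smul]
    simp [smul_eq_mul]
    rfl
  -- Φ = φ ∘ (id, q)
  have hΦc : ContDiff ℝ (⊤ : ℕ∞) (fun s => φ (s, q s)) := hφ.comp (contDiff_id.prodMk hq)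
  have hΦd : Differentiable ℝ (fun s => φ (s, q s)) := hΦc.differentiable (by simp)
  set F : ℝ → ℝ := fun t => L (G t) * ξ t + P3 t * (φ (t, q t) - deriv q t * ξ t) with hFdef
  have hFd : ∀ t, HasDerivAt F 0 t := by
    intro t
    have h1 : HasDerivAt (fun t => L (G t) * ξ t)
        ((P1 t + deriv q t * P2 t + deriv (deriv q) t * P3 t) * ξ t
          + L (G t) * deriv ξ t) t :=
      (hLG t).mul (hξd t).hasDerivAt
    have hP3' : HasDerivAt P3 (P2 t) t := by
      have := (hP3d t).hasDerivAt
      rwa [hEL t] at this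
    have h2 : HasDerivAt (fun t => φ (t, q t) - deriv q t * ξ t)
        (deriv (fun s => φ (s, q s)) t
          - (deriv (deriv q) t * ξ t + deriv q t * deriv ξ t)) t :=
      (hΦd t).hasDerivAt.sub ((hq'd t).hasDerivAt.mul (hξd t).hasDerivAt)
    have h3 := h1.add (hP3'.mul h2)
    refine h3.congr_deriv (Eq.symm ?_)
    have hi := hinv t
    simp only [hGdef]
    nlinarith [hi]
  have hcst : ∀ s t : ℝ, F s = F t :=
    is_const_of_deriv_eq_zero (fun t => (hFd t).differentiableAt)
      (fun t => (hFd t).deriv)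
  intro s t
  rw [hJ s, hJ t]
  have hs := hcst s t
  simpa [hFdef, hGdef] using hs
end

section
/- Let n ≥ 1, let L : ℝⁿ × ℝ × ℝⁿ → ℝ be a smooth first-order Lagrangian L(x, u, p), and let u : ℝⁿ → ℝ be a smooth Euler–Lagrange solution: ∂ᵤL(x, u(x), ∇u(x)) = ∑_{i=1}^{n} ∂ᵢ[∂_{pᵢ}L(x, u(x), ∇u(x))] for all x ∈ ℝⁿ. Let Q : ℝⁿ → ℝ be smooth and assume the infinitesimal invariance identity along u: for all x, ∂ᵤL(x, u(x), ∇u(x))·Q(x) + ∑_{i=1}^{n} ∂_{pᵢ}L(x, u(x), ∇u(x))·∂ᵢQ(x) = 0. Then the Noether current B = (B₁, …, Bₙ), Bᵢ(x) = ∂_{pᵢ}L(x, u(x), ∇u(x))·Q(x), is divergence-free: ∑_{i=1}^{n} ∂ᵢBᵢ(x) = 0 for all x ∈ ℝⁿ (Div B = 0, the conservation law of Noether's first theorem for n independent variables). -/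
/-- The `i`-th partial derivative of a function on `ℝⁿ = Fin n → ℝ`. -/
noncomputable def pderiv' {n : ℕ} (i : Fin n) (f : (Fin n → ℝ) → ℝ)
    (x : Fin n → ℝ) : ℝ :=
  fderiv ℝ f x (Pi.single i 1)

/-- The gradient of a function on `ℝⁿ`. -/
noncomputable def grad' {n : ℕ} (f : (Fin n → ℝ) → ℝ) (x : Fin n → ℝ) :
    Fin n → ℝ :=
  fun i => pderiv' i f x

/-- The conservation law of Noether's first theorem for `n` independent
variables: for a smooth first-order Lagrangian `L(x, u, p)` on
`ℝⁿ × ℝ × ℝⁿ`, a smooth Euler–Lagrange solution `u : ℝⁿ → ℝ`, and a smooth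
characteristic `Q` satisfying the infinitesimal invariance identity
`∂ᵤL·Q + ∑ᵢ ∂_{pᵢ}L·∂ᵢQ = 0` along `u`, the Noether current
`Bᵢ = ∂_{pᵢ}L(x, u, ∇u)·Q` is divergence-free: `∑ᵢ ∂ᵢBᵢ = 0`. -/
theorem noether_first_theorem_n_variables
    {n : ℕ} (hn : 1 ≤ n)
    (L : (Fin n → ℝ) × ℝ × (Fin n → ℝ) → ℝ)
    (u Q : (Fin n → ℝ) → ℝ)
    (hL : ContDiff ℝ (⊤ : ℕ∞) L)
    (hu : ContDiff ℝ (⊤ : ℕ∞) u)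
    (hQ : ContDiff ℝ (⊤ : ℕ∞) Q)
    (Pu : (Fin n → ℝ) → ℝ) (Pp : Fin n → (Fin n → ℝ) → ℝ)
    (hPu : ∀ x, Pu x = deriv (fun s => L (x, s, grad' u x)) (u x))
    (hPp : ∀ i x, Pp i x
      = fderiv ℝ (fun w => L (x, u x, w)) (grad' u x) (Pi.single i 1))
    (hEL : ∀ x, Pu x = ∑ i, pderiv' i (Pp i) x)
    (hinv : ∀ x, Pu x * Q x + ∑ i, Pp i x * pderiv' i Q x = 0) :
    ∀ x, ∑ i, pderiv' i (fun y => Pp i y * Q y) x = 0 := by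
  -- smoothness of grad' u
  have hgrad : ContDiff ℝ (⊤ : ℕ∞) (grad' u) := by
    rw [contDiff_pi]
    intro i
    simp only [grad', pderiv']
    exact (hu.fderiv_right (by exact_mod_cast le_top)).clm_apply contDiff_const
  have hφ : ContDiff ℝ (⊤ : ℕ∞) (fun x => ((x, u x, grad' u x) :
      (Fin n → ℝ) × ℝ × (Fin n → ℝ))) := contDiff_id.prodMk (hu.prodMk hgrad)
  have hPp' : ∀ i, Pp i = fun x =>
      fderiv ℝ L (x, u x, grad' u x) (0, 0, Pi.single i 1) := by
    intro i; funext x; rw [hPp]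
    have h1 : HasFDerivAt (fun w : Fin n → ℝ =>
        ((x, u x, w) : (Fin n → ℝ) × ℝ × (Fin n → ℝ)))
        (ContinuousLinearMap.prod 0 (ContinuousLinearMap.prod 0
          (ContinuousLinearMap.id ℝ (Fin n → ℝ)))) (grad' u x) :=
      HasFDerivAt.prodMk (hasFDerivAt_const _ _) (HasFDerivAt.prodMk (hasFDerivAt_const _ _) (hasFDerivAt_id _))
    have h2 := ((hL.differentiable (by simp) (x, u x, grad' u x)).hasFDerivAt).comp
      (grad' u x) h1
    have h3 : fderiv ℝ (fun w => L (x, u x, w)) (grad' u x)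
        = (fderiv ℝ L (x, u x, grad' u x)).comp
          (ContinuousLinearMap.prod 0 (ContinuousLinearMap.prod 0
            (ContinuousLinearMap.id ℝ (Fin n → ℝ)))) := h2.fderiv
    rw [h3]
    simp
  have hPpC : ∀ i, ContDiff ℝ (⊤ : ℕ∞) (Pp i) := by
    intro i
    rw [hPp' i]
    exact ((hL.fderiv_right (by exact_mod_cast le_top)).comp hφ).clm_apply contDiff_const
  intro x
  have key : ∀ i : Fin n, pderiv' i (fun y => Pp i y * Q y) x
      = pderiv' i (Pp i) x * Q x + Pp i x * pderiv' i Q x := by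
    intro i
    simp only [pderiv']
    rw [fderiv_fun_mul ((hPpC i).differentiable (by simp) x) (hQ.differentiable (by simp) x)]
    simp
    ring
  simp_rw [key]
  rw [Finset.sum_add_distrib, ← Finset.sum_mul, ← hEL x]
  linarith [hinv x]
end

section
/- Let n ≥ 1 and let ψ, c, a₁, …, aₙ : ℝⁿ → ℝ be smooth. Suppose that for every smooth compactly supported p : ℝⁿ → ℝ the integral ∫_{ℝⁿ} ψ(x)·(c(x)·p(x) + ∑_{i=1}^{n} aᵢ(x)·∂ᵢp(x)) dx vanishes. Then c(x)·ψ(x) = ∑_{i=1}^{n} ∂ᵢ[aᵢψ](x) for all x ∈ ℝⁿ. (An instance of Noether's second theorem in n independent variables: invariance under an infinitesimal symmetry D(p) = c·p + ∑ᵢ aᵢ·∂ᵢp depending linearly on an arbitrary function p of x₁, …, xₙ and its first derivatives forces the differential identity D*(ψ) = 0.) -/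
open MeasureTheory

/-- An instance of Noether's second theorem in `n` independent variables:
if for every smooth compactly supported test function `p : ℝⁿ → ℝ` the
integral `∫ ψ·(c·p + ∑ᵢ aᵢ·∂ᵢp)` vanishes, then the differential identity
`D*(ψ) = 0` holds: `c·ψ = ∑ᵢ ∂ᵢ(aᵢψ)` identically. -/
theorem noether_second_theorem_n_variables
    {n : ℕ} (hn : 1 ≤ n)
    (ψ c : (Fin n → ℝ) → ℝ) (a : Fin n → (Fin n → ℝ) → ℝ)
    (hψ : ContDiff ℝ (⊤ : ℕ∞) ψ)
    (hc : ContDiff ℝ (⊤ : ℕ∞) c)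
    (ha : ∀ i, ContDiff ℝ (⊤ : ℕ∞) (a i))
    (hvan : ∀ p : (Fin n → ℝ) → ℝ,
      ContDiff ℝ (⊤ : ℕ∞) p → HasCompactSupport p →
      ∫ x : Fin n → ℝ, ψ x * (c x * p x + ∑ i, a i x * pderiv' i p x) = 0) :
    ∀ x : Fin n → ℝ,
      c x * ψ x = ∑ i, pderiv' i (fun y => a i y * ψ y) x := by
  set f : (Fin n → ℝ) → ℝ :=
    fun x => c x * ψ x - ∑ i, pderiv' i (fun y => a i y * ψ y) x with hf
  -- smoothness/continuity facts
  have haψ : ∀ i, ContDiff ℝ (⊤ : ℕ∞) (fun y => a i y * ψ y) := fun i => (ha i).mul hψ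
  have hp_cont : ∀ i, Continuous (fun x => pderiv' i (fun y => a i y * ψ y) x) := by
    intro i
    have : Continuous (fun x => fderiv ℝ (fun y => a i y * ψ y) x) :=
      ((haψ i).fderiv_right (m := (⊤:ℕ∞)) (by exact_mod_cast le_rfl)).continuous
    exact (this.clm_apply continuous_const)
  have hf_cont : Continuous f := by
    apply ((hc.continuous.mul hψ.continuous).sub _)
    exact continuous_finset_sum _ fun i _ => hp_cont i
  -- key: ∫ p • f = 0 for every test function p
  have key : ∀ p : (Fin n → ℝ) → ℝ, ContDiff ℝ (⊤ : ℕ∞) p → HasCompactSupport p →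
      ∫ x : Fin n → ℝ, p x • f x = 0 := by
    intro p hp hps
    -- integration by parts in each direction
    have ibp : ∀ i : Fin n,
        ∫ x : Fin n → ℝ, p x * pderiv' i (fun y => a i y * ψ y) x
          = - ∫ x : Fin n → ℝ, a i x * ψ x * pderiv' i p x := by
      intro i
      have h1 : Integrable (fun x : Fin n → ℝ =>
          fderiv ℝ p x (Pi.single i 1) * (a i x * ψ x)) := by
        apply Continuous.integrable_of_hasCompactSupport
        · exact ((hp.fderiv_right (m := (⊤:ℕ∞)) (by exact_mod_cast le_rfl)).continuous.clm_apply
            continuous_const).mul ((haψ i).continuous)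
        · apply HasCompactSupport.mul_right
          exact (hps.fderiv (𝕜 := ℝ)).comp_left (g := fun L : (Fin n → ℝ) →L[ℝ] ℝ =>
            L (Pi.single i 1)) (by simp)
      have h2 : Integrable (fun x : Fin n → ℝ =>
          p x * fderiv ℝ (fun y => a i y * ψ y) x (Pi.single i 1)) := by
        apply Continuous.integrable_of_hasCompactSupport
        · exact hp.continuous.mul (hp_cont i)
        · exact hps.mul_right
      have h3 : Integrable (fun x : Fin n → ℝ => p x * (a i x * ψ x)) := by
        apply Continuous.integrable_of_hasCompactSupport
        · exact hp.continuous.mul ((haψ i).continuous)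
        · exact hps.mul_right
      have hkey := integral_mul_fderiv_eq_neg_fderiv_mul_of_integrable h1 h2 h3
        (fun x _ => hp.differentiable (by simp) x)
        (fun x _ => (haψ i).differentiable (by simp) x)
      -- hkey : ∫ p * ∂ᵢ(aψ) = - ∫ ∂ᵢp * (aψ)
      simp only [pderiv']
      rw [hkey, neg_inj]
      apply integral_congr_ae
      filter_upwards with x
      ring
    -- expand the integral of p • f
    have hint1 : Integrable (fun x : Fin n → ℝ => p x * (c x * ψ x)) := by
      apply Continuous.integrable_of_hasCompactSupport
      · exact hp.continuous.mul (hc.continuous.mul hψ.continuous)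
      · exact hps.mul_right
    have hint2 : ∀ i : Fin n, Integrable (fun x : Fin n → ℝ =>
        p x * pderiv' i (fun y => a i y * ψ y) x) := by
      intro i
      apply Continuous.integrable_of_hasCompactSupport
      · exact hp.continuous.mul (hp_cont i)
      · exact hps.mul_right
    have expand : ∫ x : Fin n → ℝ, p x • f x
        = (∫ x : Fin n → ℝ, p x * (c x * ψ x))
          - ∑ i, ∫ x : Fin n → ℝ, p x * pderiv' i (fun y => a i y * ψ y) x := by
      rw [← integral_finset_sum _ (fun i _ => hint2 i), ← integral_sub hint1
        (integrable_finset_sum _ (fun i _ => hint2 i))]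
      apply integral_congr_ae
      filter_upwards with x
      simp [hf, smul_eq_mul, mul_sub, Finset.mul_sum]
    rw [expand]
    have sumeq : ∑ i, ∫ x : Fin n → ℝ, p x * pderiv' i (fun y => a i y * ψ y) x
        = ∑ i, - ∫ x : Fin n → ℝ, a i x * ψ x * pderiv' i p x :=
      Finset.sum_congr rfl fun i _ => ibp i
    rw [sumeq]
    simp only [Finset.sum_neg_distrib, sub_neg_eq_add]
    rw [← hvan p hp hps]
    have hintsum : ∀ i : Fin n, Integrable
        (fun x : Fin n → ℝ => a i x * ψ x * pderiv' i p x) := by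
      intro i
      apply Continuous.integrable_of_hasCompactSupport
      · exact ((haψ i).continuous).mul (((hp.fderiv_right (m := (⊤:ℕ∞))
          (by exact_mod_cast le_rfl)).continuous.clm_apply continuous_const))
      · apply HasCompactSupport.mul_left
        exact (hps.fderiv (𝕜 := ℝ)).comp_left (g := fun L : (Fin n → ℝ) →L[ℝ] ℝ =>
          L (Pi.single i 1)) (by simp)
    rw [← integral_finset_sum _ (fun i _ => hintsum i),
      ← integral_add hint1 (integrable_finset_sum _ (fun i _ => hintsum i))]
    apply integral_congr_ae
    filter_upwards with x
    rw [mul_add, Finset.mul_sum]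
    congr 1
    · ring
    · exact Finset.sum_congr rfl fun i _ => by ring
  -- fundamental lemma of the calculus of variations
  have hf_loc : LocallyIntegrable f (volume : Measure (Fin n → ℝ)) :=
    hf_cont.locallyIntegrable
  have hae : ∀ᵐ x : Fin n → ℝ, f x = 0 :=
    ae_eq_zero_of_integral_contDiff_smul_eq_zero hf_loc key
  have hzero : f = fun _ => (0:ℝ) :=
    (hf_cont.ae_eq_iff_eq volume (continuous_const : Continuous fun _ : Fin n → ℝ => (0:ℝ))).mp
      (by filter_upwards [hae] with x hx using hx)
  intro x
  have hx : f x = 0 := by rw [hzero]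
  simp only [hf] at hx
  linarith
end
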